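/- If p : ℝ satisfies 0 < p ≤ 1 and m = ⌊π/(4·arcsin(√p))⌋, then sin²((2m+1)·arcsin(√p)) ≥ 1/2. (This is the Grover success-probability bound: measuring after m iterations yields a marked item with probability at least 1/2.) -/
import Mathlib


/-- Grover success-probability bound: if `0 < p ≤ 1` and
`m = ⌊π / (4 · arcsin √p)⌋`, then measuring after `m` Grover iterations
succeeds with probability `sin²((2m+1)·arcsin √p) ≥ 1/2`. -/
theorem grover_success_probability (p : ℝ) (hp : 0 < p) (hp1 : p ≤ 1)
    (m : ℤ) (hm : m = ⌊Real.pi / (4 * Real.arcsin (Real.sqrt p))⌋) :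
    (1 : ℝ) / 2 ≤
      Real.sin ((2 * (m : ℝ) + 1) * Real.arcsin (Real.sqrt p)) ^ 2 := by
  set θ := Real.arcsin (Real.sqrt p) with hθdef
  have hs0 : (0:ℝ) < Real.sqrt p := Real.sqrt_pos.mpr hp
  have hs1 : Real.sqrt p ≤ 1 := by
    rw [show (1:ℝ) = Real.sqrt 1 by simp]
    exact Real.sqrt_le_sqrt hp1
  have hθ0 : 0 < θ := Real.arcsin_pos.mpr hs0
  have hθ2 : θ ≤ Real.pi / 2 := Real.arcsin_le_pi_div_two _
  have hpi : (0:ℝ) < Real.pi := Real.pi_pos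
  have hsin : Real.sin θ = Real.sqrt p := Real.sin_arcsin (by linarith) hs1
  have h2 : (2:ℝ) ≤ Real.sqrt 2 ^ 2 := by
    rw [Real.sq_sqrt (by norm_num)]
  have h2' : (0:ℝ) ≤ Real.sqrt 2 := Real.sqrt_nonneg 2
  by_cases hcase : θ ≤ Real.pi / 4
  · have h1 : (m:ℝ) ≤ Real.pi / (4 * θ) := by
      rw [hm]; exact Int.floor_le _
    have h2f : Real.pi / (4 * θ) < (m:ℝ) + 1 := by
      rw [hm]; exact Int.lt_floor_add_one _
    have hA : (m:ℝ) * (4 * θ) ≤ Real.pi := by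
      rw [div_lt_iff₀ (by linarith)] at h2f
      rw [le_div_iff₀ (by linarith)] at h1
      linarith
    have hB : Real.pi < ((m:ℝ) + 1) * (4 * θ) := by
      rw [div_lt_iff₀ (by linarith)] at h2f
      linarith
    set x := (2 * (m:ℝ) + 1) * θ with hxdef
    have hx1 : x ≤ Real.pi / 2 + θ := by rw [hxdef]; nlinarith
    have hx2 : Real.pi / 2 - θ < x := by rw [hxdef]; nlinarith
    have habs : |Real.pi / 2 - x| ≤ Real.pi / 4 := by
      rw [abs_le]; constructor <;> linarith
    have hcos : Real.cos (Real.pi / 4) ≤ Real.cos (|Real.pi / 2 - x|) := by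
      apply Real.cos_le_cos_of_nonneg_of_le_pi (abs_nonneg _) (by linarith)
      exact habs
    rw [Real.cos_abs, Real.cos_pi_div_two_sub, Real.cos_pi_div_four] at hcos
    nlinarith [Real.sin_nonneg_of_nonneg_of_le_pi (x := x) (by linarith) (by linarith)]
  · push_neg at hcase
    have hm0 : m = 0 := by
      rw [hm]
      have hlt : Real.pi / (4 * θ) < 1 := by
        rw [div_lt_one (by linarith)]; linarith
      have hgt : (0:ℝ) ≤ Real.pi / (4 * θ) := by positivity
      rw [Int.floor_eq_zero_iff]
      constructor <;> simpa using (by assumption : _)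
    subst hm0
    simp only [Int.cast_zero, mul_zero, zero_add, one_mul]
    rw [hsin, Real.sq_sqrt hp.le]
    have hmono : Real.sin (Real.pi / 4) < Real.sin θ :=
      Real.sin_lt_sin_of_lt_of_le_pi_div_two (by linarith) hθ2 hcase
    rw [Real.sin_pi_div_four, hsin] at hmono
    nlinarith [Real.sq_sqrt hp.le, Real.sqrt_nonneg p]
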